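/- For all α, β ∈ 𝒜ⁿ, every i ∈ {1,…,n} and every s ≥ 0, the following identity holds in 𝒜 (sums over k, l, m): α_k (∂/∂u^i_{(s)})(η^{kl} ∂_x β_l) + η^{lm}(∂_x α_m)(∂β_l/∂u^i_{(s)}) = ∂_x( α_k η^{kl} ∂β_l/∂u^i_{(s)} ) + α_k η^{kl} ∂β_l/∂u^i_{(s−1)}, where the last term is absent for s = 0. Consequently, in flat coordinates the bracket {α,β} := Lie_{Pβ}α − Lie_{Pα}β + δ⟨β, Pα⟩ is, as a 1-form on the formal loop space (i.e., modulo the image of d), the reduced 1-form with components {α,β}_i = Σ_{k,l,s} η^{kl}[ (∂_x^{s+1}β_l)(∂α_i/∂u^k_{(s)}) − (∂_x^{s+1}α_l)(∂β_i/∂u^k_{(s)}) ]. -/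

import Mathlib

open Finset

/-- An abstract model of the ring `𝒜` of differential polynomials in the formal
variables `u^i_{(s)}` (`i = 1,…,n`, `s ≥ 0`, `u^i_{(0)} = u^i`): a commutative
`ℝ`-algebra `A` equipped with the variables `u (i,s)`, the partial derivatives
`pd (i,s) = ∂/∂u^i_{(s)}` (commuting `ℝ`-linear derivations with
`∂u^j_{(t)}/∂u^i_{(s)} = δ`), a finiteness witness `supp f` (each `f` depends on
finitely many of the variables), and the total `x`-derivative
`∂_x f = Σ_{i,s} u^i_{(s+1)} ∂f/∂u^i_{(s)}` (a finite sum on each `f`). -/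
structure DiffPolyAlg (n : ℕ) (A : Type*) [CommRing A] [Algebra ℝ A] where
  u : Fin n × ℕ → A
  pd : Fin n × ℕ → A → A
  pd_add : ∀ v f g, pd v (f + g) = pd v f + pd v g
  pd_smul : ∀ v (r : ℝ) f, pd v (r • f) = r • pd v f
  pd_mul : ∀ v f g, pd v (f * g) = pd v f * g + f * pd v g
  pd_u : ∀ v w, pd v (u w) = if v = w then 1 else 0
  pd_comm : ∀ v w f, pd v (pd w f) = pd w (pd v f)
  supp : A → Finset (Fin n × ℕ)
  pd_eq_zero : ∀ f v, v ∉ supp f → pd v f = 0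
  Dx : A → A
  Dx_add : ∀ f g, Dx (f + g) = Dx f + Dx g
  Dx_smul : ∀ (r : ℝ) f, Dx (r • f) = r • Dx f
  Dx_mul : ∀ f g, Dx (f * g) = Dx f * g + f * Dx g
  Dx_spec : ∀ f, ∀ S : Finset (Fin n × ℕ), supp f ⊆ S →
      Dx f = ∑ v ∈ S, u (v.1, v.2 + 1) * pd v f

namespace DiffPolyAlg

variable {n : ℕ} {A : Type*} [CommRing A] [Algebra ℝ A]

/-- The finite set of orders `s` such that `∂f/∂u^i_{(s)}` can be nonzero;
sums `Σ_s` below are taken over this set. -/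
def sset (D : DiffPolyAlg n A) (f : A) (i : Fin n) : Finset ℕ :=
  ((D.supp f).filter fun v => v.1 = i).image Prod.snd

/-- The components `{α,β}_i = Σ_{k,l,s} η^{kl} [ (∂_x^{s+1}β_l)(∂α_i/∂u^k_{(s)})
− (∂_x^{s+1}α_l)(∂β_i/∂u^k_{(s)}) ]` of the Poisson bracket of two reduced
1-forms in flat coordinates (the sum over the pairs `(k,s)` is restricted to the
finite set where the partial derivatives can be nonzero). -/
def pbracket (D : DiffPolyAlg n A) (η : Fin n → Fin n → ℝ)
    (α β : Fin n → A) : Fin n → A := fun i =>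
  (∑ v ∈ D.supp (α i), ∑ l, η v.1 l • (D.Dx^[v.2 + 1] (β l) * D.pd v (α i)))
    - ∑ v ∈ D.supp (β i), ∑ l, η v.1 l • (D.Dx^[v.2 + 1] (α l) * D.pd v (β i))

end DiffPolyAlg

namespace DiffPolyAlg

variable {n : ℕ} {A : Type*} [CommRing A] [Algebra ℝ A]

/-- The Hamiltonian vector field `Pβ` in flat coordinates: `(Pβ)^k = η^{kl} ∂_x β_l`. -/
def flatP (D : DiffPolyAlg n A) (η : Fin n → Fin n → ℝ) (β : Fin n → A) :
    Fin n → A := fun k => ∑ l, η k l • D.Dx (β l)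

/-- The coefficient of `δu^i_{(t)}` in the (non-reduced) 1-form
`Lie_{Pβ}α − Lie_{Pα}β + δ⟨β, Pα⟩` in flat coordinates. -/
def rawBracketComp (D : DiffPolyAlg n A) (η : Fin n → Fin n → ℝ)
    (α β : Fin n → A) : Fin n → ℕ → A := fun i t =>
  (if t = 0 then
      (∑ v ∈ D.supp (α i), D.Dx^[v.2] (flatP D η β v.1) * D.pd v (α i))
        - ∑ v ∈ D.supp (β i), D.Dx^[v.2] (flatP D η α v.1) * D.pd v (β i)
    else 0)
    + (∑ k, α k * D.pd (i, t) (flatP D η β k))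
    - (∑ k, β k * D.pd (i, t) (flatP D η α k))
    + D.pd (i, t) (∑ l, β l * flatP D η α l)

/-- A finite set of orders `t` containing all those for which the coefficient of
`δu^i_{(t)}` in `Lie_{Pβ}α − Lie_{Pα}β + δ⟨β, Pα⟩` can be nonzero. -/
def rawBracketOrders (D : DiffPolyAlg n A) (η : Fin n → Fin n → ℝ)
    (α β : Fin n → A) (i : Fin n) : Finset ℕ :=
  insert 0
    ((Finset.univ.biUnion fun k =>
        D.sset (flatP D η β k) i ∪ D.sset (flatP D η α k) i)
      ∪ D.sset (∑ l, β l * flatP D η α l) i)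

/-- The reduced (integrated-by-parts) components
`R_i = Σ_t (−1)^t ∂_x^t (coefficient of δu^i_{(t)})` of the 1-form
`{α,β} = Lie_{Pβ}α − Lie_{Pα}β + δ⟨β, Pα⟩`; two 1-forms are equal modulo the
image of `d` precisely when their reduced components coincide. -/
def reducedRawBracket (D : DiffPolyAlg n A) (η : Fin n → Fin n → ℝ)
    (α β : Fin n → A) : Fin n → A := fun i =>
  ∑ t ∈ rawBracketOrders D η α β i,
    ((-1 : ℝ) ^ t) • D.Dx^[t] (rawBracketComp D η α β i t)

end DiffPolyAlg
namespace DiffPolyAlg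

variable {n : ℕ} {A : Type*} [CommRing A] [Algebra ℝ A]

/-- `pd v` as an `ℝ`-linear map. -/
def pdLM (D : DiffPolyAlg n A) (v : Fin n × ℕ) : A →ₗ[ℝ] A where
  toFun := D.pd v
  map_add' := D.pd_add v
  map_smul' := D.pd_smul v

/-- `Dx` as an `ℝ`-linear map. -/
def DxLM (D : DiffPolyAlg n A) : A →ₗ[ℝ] A where
  toFun := D.Dx
  map_add' := D.Dx_add
  map_smul' := D.Dx_smul

lemma pd_sum (D : DiffPolyAlg n A) (v : Fin n × ℕ) {ι : Type*} (s : Finset ι) (f : ι → A) :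
    D.pd v (∑ x ∈ s, f x) = ∑ x ∈ s, D.pd v (f x) := map_sum (D.pdLM v) f s

lemma Dx_sum (D : DiffPolyAlg n A) {ι : Type*} (s : Finset ι) (f : ι → A) :
    D.Dx (∑ x ∈ s, f x) = ∑ x ∈ s, D.Dx (f x) := map_sum D.DxLM f s

lemma pd_zero (D : DiffPolyAlg n A) (v : Fin n × ℕ) : D.pd v 0 = 0 := map_zero (D.pdLM v)

lemma Dx_zero (D : DiffPolyAlg n A) : D.Dx 0 = 0 := map_zero D.DxLM

lemma Dx_iter_smul (D : DiffPolyAlg n A) (m : ℕ) (r : ℝ) (f : A) :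
    D.Dx^[m] (r • f) = r • D.Dx^[m] f := by
  induction m generalizing f with
  | zero => rfl
  | succ m ih => rw [Function.iterate_succ_apply, D.Dx_smul, ih, ← Function.iterate_succ_apply]

lemma Dx_iter_add (D : DiffPolyAlg n A) (m : ℕ) (f g : A) :
    D.Dx^[m] (f + g) = D.Dx^[m] f + D.Dx^[m] g := by
  induction m generalizing f g with
  | zero => rfl
  | succ m ih => rw [Function.iterate_succ_apply, D.Dx_add, ih, ← Function.iterate_succ_apply,
      ← Function.iterate_succ_apply]

lemma Dx_iter_zero (D : DiffPolyAlg n A) (m : ℕ) : D.Dx^[m] (0 : A) = 0 := by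
  induction m with
  | zero => rfl
  | succ m ih => rw [Function.iterate_succ_apply, D.Dx_zero, ih]

lemma Dx_iter_sum (D : DiffPolyAlg n A) (m : ℕ) {ι : Type*} (s : Finset ι) (f : ι → A) :
    D.Dx^[m] (∑ x ∈ s, f x) = ∑ x ∈ s, D.Dx^[m] (f x) := by
  classical
  induction s using Finset.induction with
  | empty => simp [D.Dx_iter_zero]
  | insert _ _ h ih => rw [Finset.sum_insert h, Finset.sum_insert h, D.Dx_iter_add, ih]

lemma pd_of_not_sset (D : DiffPolyAlg n A) (f : A) (i : Fin n) (t : ℕ)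
    (ht : t ∉ D.sset f i) : D.pd (i, t) f = 0 := by
  apply D.pd_eq_zero
  intro h
  exact ht (Finset.mem_image.2 ⟨(i, t), Finset.mem_filter.2 ⟨h, rfl⟩, rfl⟩)

/-- Commutation of `∂/∂u^i_{(s)}` with the total derivative. -/
lemma pd_Dx (D : DiffPolyAlg n A) (f : A) (i : Fin n) (s : ℕ) :
    D.pd (i, s) (D.Dx f) = D.Dx (D.pd (i, s) f)
      + (if s = 0 then 0 else D.pd (i, s - 1) f) := by
  classical
  set S : Finset (Fin n × ℕ) :=
    insert (i, s - 1) (D.supp f ∪ D.supp (D.pd (i, s) f)) with hS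
  have hfS : D.supp f ⊆ S := fun v hv => by simp [hS, hv]
  have hgS : D.supp (D.pd (i, s) f) ⊆ S := fun v hv => by simp [hS, hv]
  rw [D.Dx_spec f S hfS, D.pd_sum]
  have hterm : ∀ v ∈ S, D.pd (i, s) (D.u (v.1, v.2 + 1) * D.pd v f)
      = (if ((i, s) : Fin n × ℕ) = (v.1, v.2 + 1) then 1 else 0) * D.pd v f
        + D.u (v.1, v.2 + 1) * D.pd v (D.pd (i, s) f) := by
    intro v _
    rw [D.pd_mul, D.pd_u, D.pd_comm]
  rw [Finset.sum_congr rfl hterm, Finset.sum_add_distrib,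
    ← D.Dx_spec (D.pd (i, s) f) S hgS, add_comm]
  congr 1
  rcases Nat.eq_zero_or_pos s with hs | hs
  · subst hs
    rw [if_pos rfl]
    apply Finset.sum_eq_zero
    intro v _
    rw [if_neg (by simp [Prod.ext_iff]), zero_mul]
  · obtain ⟨s', rfl⟩ : ∃ s', s = s' + 1 := ⟨s - 1, (Nat.succ_pred_eq_of_pos hs).symm⟩
    rw [if_neg (Nat.succ_ne_zero s')]
    have hterm2 : ∀ v ∈ S,
        (if ((i, s' + 1) : Fin n × ℕ) = (v.1, v.2 + 1) then (1 : A) else 0) * D.pd v f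
        = if ((i, s') : Fin n × ℕ) = v then D.pd v f else 0 := by
      intro v _
      by_cases h : ((i, s') : Fin n × ℕ) = v
      · subst h
        simp
      · rw [if_neg h, if_neg, zero_mul]
        intro hc
        apply h
        have h1 : i = v.1 ∧ s' + 1 = v.2 + 1 := by simpa [Prod.ext_iff] using hc
        exact Prod.ext h1.1 (Nat.succ_injective h1.2)
    rw [Finset.sum_congr rfl hterm2, Finset.sum_ite_eq, if_pos (by simp [hS])]
    norm_num

end DiffPolyAlg
namespace DiffPolyAlg

variable {n : ℕ} {A : Type*} [CommRing A] [Algebra ℝ A]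

/-- **Part 1**: the key pointwise identity. -/
lemma key1 (D : DiffPolyAlg n A) (η : Fin n → Fin n → ℝ)
    (hη : ∀ k l, η k l = η l k) (α β : Fin n → A) (i : Fin n) (s : ℕ) :
    (∑ k, α k * D.pd (i, s) (flatP D η β k))
        + (∑ l, ∑ m, η l m • (D.Dx (α m) * D.pd (i, s) (β l)))
      = D.Dx (∑ k, ∑ l, η k l • (α k * D.pd (i, s) (β l)))
        + (if s = 0 then 0
            else ∑ k, ∑ l, η k l • (α k * D.pd (i, s - 1) (β l))) := by
  have h1 : ∀ k, α k * D.pd (i, s) (flatP D η β k)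
      = ∑ l, (η k l • (α k * D.Dx (D.pd (i, s) (β l)))
          + η k l • (α k * (if s = 0 then 0 else D.pd (i, s - 1) (β l)))) := by
    intro k
    rw [flatP, D.pd_sum, Finset.mul_sum]
    refine Finset.sum_congr rfl fun l _ => ?_
    rw [D.pd_smul, D.pd_Dx, mul_smul_comm, mul_add, smul_add]
  have h2 : D.Dx (∑ k, ∑ l, η k l • (α k * D.pd (i, s) (β l)))
      = ∑ k, ∑ l, (η k l • (D.Dx (α k) * D.pd (i, s) (β l))
          + η k l • (α k * D.Dx (D.pd (i, s) (β l)))) := by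
    rw [D.Dx_sum]
    refine Finset.sum_congr rfl fun k _ => ?_
    rw [D.Dx_sum]
    refine Finset.sum_congr rfl fun l _ => ?_
    rw [D.Dx_smul, D.Dx_mul, smul_add]
  have h3 : (∑ l, ∑ m, η l m • (D.Dx (α m) * D.pd (i, s) (β l)))
      = ∑ k, ∑ l, η k l • (D.Dx (α k) * D.pd (i, s) (β l)) := by
    rw [Finset.sum_comm]
    exact Finset.sum_congr rfl fun m _ => Finset.sum_congr rfl fun l _ => by rw [hη]
  have h4 : (if s = 0 then (0 : A)
        else ∑ k, ∑ l, η k l • (α k * D.pd (i, s - 1) (β l)))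
      = ∑ k, ∑ l, η k l • (α k * (if s = 0 then 0 else D.pd (i, s - 1) (β l))) := by
    split
    · simp
    · rfl
  rw [h2, h3, h4]
  simp only [h1, Finset.sum_add_distrib]
  abel

end DiffPolyAlg
namespace DiffPolyAlg

variable {n : ℕ} {A : Type*} [CommRing A] [Algebra ℝ A]

/-- `H i t = Σ_{k,l} η^{kl} α_k ∂β_l/∂u^i_{(t)}`. -/
def Hc (D : DiffPolyAlg n A) (η : Fin n → Fin n → ℝ) (α β : Fin n → A)
    (i : Fin n) (t : ℕ) : A :=
  ∑ k, ∑ l, η k l • (α k * D.pd (i, t) (β l))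

/-- `G i t` is the non-`δ`-part of the raw bracket coefficient. -/
def Gc (D : DiffPolyAlg n A) (η : Fin n → Fin n → ℝ) (α β : Fin n → A)
    (i : Fin n) (t : ℕ) : A :=
  (∑ k, α k * D.pd (i, t) (flatP D η β k))
    - (∑ k, β k * D.pd (i, t) (flatP D η α k))
    + D.pd (i, t) (∑ l, β l * flatP D η α l)

lemma Gc_eq (D : DiffPolyAlg n A) (η : Fin n → Fin n → ℝ)
    (hη : ∀ k l, η k l = η l k) (α β : Fin n → A) (i : Fin n) (t : ℕ) :
    Gc D η α β i t = D.Dx (Hc D η α β i t)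
      + (if t = 0 then 0 else Hc D η α β i (t - 1)) := by
  have hpd : D.pd (i, t) (∑ l, β l * flatP D η α l)
      = (∑ l, D.pd (i, t) (β l) * flatP D η α l)
        + ∑ l, β l * D.pd (i, t) (flatP D η α l) := by
    rw [D.pd_sum, ← Finset.sum_add_distrib]
    exact Finset.sum_congr rfl fun l _ => D.pd_mul _ _ _
  have hmid : (∑ l, D.pd (i, t) (β l) * flatP D η α l)
      = ∑ l, ∑ m, η l m • (D.Dx (α m) * D.pd (i, t) (β l)) := by
    refine Finset.sum_congr rfl fun l _ => ?_
    rw [flatP, Finset.mul_sum]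
    refine Finset.sum_congr rfl fun m _ => ?_
    rw [mul_smul_comm, mul_comm]
  have := key1 D η hη α β i t
  rw [Gc, hpd, hmid]
  calc (∑ k, α k * D.pd (i, t) (flatP D η β k))
        - (∑ k, β k * D.pd (i, t) (flatP D η α k))
        + ((∑ l, ∑ m, η l m • (D.Dx (α m) * D.pd (i, t) (β l)))
            + ∑ l, β l * D.pd (i, t) (flatP D η α l))
      = (∑ k, α k * D.pd (i, t) (flatP D η β k))
          + (∑ l, ∑ m, η l m • (D.Dx (α m) * D.pd (i, t) (β l))) := by abel
    _ = _ := this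

lemma Gc_eq_zero (D : DiffPolyAlg n A) (η : Fin n → Fin n → ℝ) (α β : Fin n → A)
    (i : Fin n) (t : ℕ) (ht : t ∉ rawBracketOrders D η α β i) :
    Gc D η α β i t = 0 := by
  simp only [rawBracketOrders, Finset.mem_insert, Finset.mem_union,
    Finset.mem_biUnion, Finset.mem_univ, true_and, not_or, not_exists] at ht
  obtain ⟨ht0, hkk, hC⟩ := ht
  have e1 : ∀ k, D.pd (i, t) (flatP D η β k) = 0 :=
    fun k => D.pd_of_not_sset _ _ _ (hkk k).1
  have e2 : ∀ k, D.pd (i, t) (flatP D η α k) = 0 :=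
    fun k => D.pd_of_not_sset _ _ _ (hkk k).2
  have e3 : D.pd (i, t) (∑ l, β l * flatP D η α l) = 0 :=
    D.pd_of_not_sset _ _ _ hC
  simp [Gc, e1, e2, e3]

lemma comp_eq (D : DiffPolyAlg n A) (η : Fin n → Fin n → ℝ) (α β : Fin n → A)
    (i : Fin n) (t : ℕ) :
    rawBracketComp D η α β i t
      = (if t = 0 then D.pbracket η α β i else 0) + Gc D η α β i t := by
  have hP : ∀ (γ δ : Fin n → A) (v : Fin n × ℕ),
      D.Dx^[v.2] (flatP D η δ v.1) * D.pd v (γ i)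
        = ∑ l, η v.1 l • (D.Dx^[v.2 + 1] (δ l) * D.pd v (γ i)) := by
    intro γ δ v
    rw [flatP, D.Dx_iter_sum, Finset.sum_mul]
    refine Finset.sum_congr rfl fun l _ => ?_
    rw [D.Dx_iter_smul, smul_mul_assoc, ← Function.iterate_succ_apply]
  have h0 : (∑ v ∈ D.supp (α i), D.Dx^[v.2] (flatP D η β v.1) * D.pd v (α i))
        - ∑ v ∈ D.supp (β i), D.Dx^[v.2] (flatP D η α v.1) * D.pd v (β i)
      = D.pbracket η α β i := by
    rw [pbracket]
    congr 1
    · exact Finset.sum_congr rfl fun v _ => hP α β v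
    · exact Finset.sum_congr rfl fun v _ => hP β α v
  rw [rawBracketComp, Gc]
  have hpd3 : D.pd (i, t) (∑ l, β l * flatP D η α l)
      = D.pd (i, t) (∑ l, β l * flatP D η α l) := rfl
  by_cases ht : t = 0
  · rw [if_pos ht, if_pos ht, ← h0]
    abel
  · rw [if_neg ht, if_neg ht]
    abel

end DiffPolyAlg
namespace DiffPolyAlg

variable {n : ℕ} {A : Type*} [CommRing A] [Algebra ℝ A]

lemma key2 (D : DiffPolyAlg n A) (η : Fin n → Fin n → ℝ)
    (hη : ∀ k l, η k l = η l k) (α β : Fin n → A) (i : Fin n) :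
    reducedRawBracket D η α β i = D.pbracket η α β i := by
  classical
  set T := rawBracketOrders D η α β i with hT
  have h0T : 0 ∈ T := Finset.mem_insert_self _ _
  have hsplit : reducedRawBracket D η α β i
      = (∑ t ∈ T, (-1 : ℝ) ^ t • D.Dx^[t] (if t = 0 then D.pbracket η α β i else 0))
        + ∑ t ∈ T, (-1 : ℝ) ^ t • D.Dx^[t] (Gc D η α β i t) := by
    rw [reducedRawBracket, ← Finset.sum_add_distrib]
    refine Finset.sum_congr rfl fun t _ => ?_
    rw [comp_eq, D.Dx_iter_add, smul_add]
  have hfirst : (∑ t ∈ T, (-1 : ℝ) ^ t •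
        D.Dx^[t] (if t = 0 then D.pbracket η α β i else 0))
      = D.pbracket η α β i := by
    rw [Finset.sum_eq_single_of_mem 0 h0T]
    · simp
    · intro t _ ht
      rw [if_neg ht, D.Dx_iter_zero, smul_zero]
  set N := T.sup id
      + ((Finset.univ : Finset (Fin n)).sup fun l => (D.supp (β l)).sup Prod.snd) + 1
    with hN
  have hTN : T ⊆ Finset.range (N + 1) := by
    intro t ht
    have : t ≤ T.sup id := Finset.le_sup (f := id) ht
    exact Finset.mem_range.2 (by omega)
  have hHN : Hc D η α β i N = 0 := by
    have hpd : ∀ l : Fin n, D.pd (i, N) (β l) = 0 := by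
      intro l
      apply D.pd_eq_zero
      intro h
      have h1 : N ≤ (D.supp (β l)).sup Prod.snd :=
        Finset.le_sup (f := Prod.snd) h
      have h2 : (D.supp (β l)).sup Prod.snd
          ≤ (Finset.univ : Finset (Fin n)).sup fun l => (D.supp (β l)).sup Prod.snd :=
        Finset.le_sup (f := fun l => (D.supp (β l)).sup Prod.snd) (Finset.mem_univ l)
      omega
    simp [Hc, hpd]
  have hsecond : (∑ t ∈ T, (-1 : ℝ) ^ t • D.Dx^[t] (Gc D η α β i t)) = 0 := by
    rw [Finset.sum_subset hTN (fun t _ htT => by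
      rw [Gc_eq_zero D η α β i t htT, D.Dx_iter_zero, smul_zero])]
    have hterm : ∀ t, (-1 : ℝ) ^ t • D.Dx^[t] (Gc D η α β i t)
        = (-1 : ℝ) ^ t • D.Dx^[t + 1] (Hc D η α β i t)
          + (-1 : ℝ) ^ t • D.Dx^[t] (if t = 0 then 0 else Hc D η α β i (t - 1)) := by
      intro t
      rw [Gc_eq D η hη α β i t, D.Dx_iter_add, smul_add, Function.iterate_succ_apply]
    simp only [hterm, Finset.sum_add_distrib]
    have hA : ∑ t ∈ Finset.range (N + 1), (-1 : ℝ) ^ t • D.Dx^[t + 1] (Hc D η α β i t)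
        = ∑ t ∈ Finset.range N, (-1 : ℝ) ^ t • D.Dx^[t + 1] (Hc D η α β i t) := by
      rw [Finset.sum_range_succ, hHN, D.Dx_iter_zero, smul_zero, add_zero]
    have hB : ∑ t ∈ Finset.range (N + 1),
          (-1 : ℝ) ^ t • D.Dx^[t] (if t = 0 then 0 else Hc D η α β i (t - 1))
        = ∑ t ∈ Finset.range N, -((-1 : ℝ) ^ t • D.Dx^[t + 1] (Hc D η α β i t)) := by
      rw [Finset.sum_range_succ']
      have h0 : ((-1 : ℝ)) ^ (0 : ℕ) •
          D.Dx^[0] (if (0 : ℕ) = 0 then (0 : A) else Hc D η α β i (0 - 1)) = 0 := by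
        simp
      rw [h0, add_zero]
      refine Finset.sum_congr rfl fun t _ => ?_
      rw [if_neg (Nat.succ_ne_zero t), Nat.add_sub_cancel, pow_succ,
        mul_comm ((-1 : ℝ) ^ t) (-1), mul_smul, neg_one_smul]
    rw [hA, hB, ← Finset.sum_add_distrib]
    exact Finset.sum_eq_zero fun t _ => add_neg_cancel _
  rw [hsplit, hfirst, hsecond, add_zero]

end DiffPolyAlg
/-- For all `α, β ∈ 𝒜ⁿ`, every `i` and every `s ≥ 0` one has
(sums over `k, l, m`):
`α_k (∂/∂u^i_{(s)})(η^{kl} ∂_x β_l) + η^{lm}(∂_x α_m)(∂β_l/∂u^i_{(s)})`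
`= ∂_x( α_k η^{kl} ∂β_l/∂u^i_{(s)} ) + α_k η^{kl} ∂β_l/∂u^i_{(s−1)}`,
where the last term is absent for `s = 0`.  Consequently, in flat coordinates
the bracket `{α,β} := Lie_{Pβ}α − Lie_{Pα}β + δ⟨β, Pα⟩` is, as a 1-form on the
formal loop space (i.e. modulo the image of `d`), the reduced 1-form with
components
`{α,β}_i = Σ_{k,l,s} η^{kl}[ (∂_x^{s+1}β_l)(∂α_i/∂u^k_{(s)}) − (∂_x^{s+1}α_l)(∂β_i/∂u^k_{(s)}) ]`. -/
theorem flat_bracket_reduced {n : ℕ} (hn : 1 ≤ n) {A : Type*} [CommRing A]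
    [Algebra ℝ A] (D : DiffPolyAlg n A)
    (η : Fin n → Fin n → ℝ) (hη_symm : ∀ k l, η k l = η l k)
    (η' : Fin n → Fin n → ℝ)
    (hη_nondeg : ∀ i j, ∑ k, η i k * η' k j = if i = j then (1 : ℝ) else 0)
    (α β : Fin n → A) :
    (∀ (i : Fin n) (s : ℕ),
        (∑ k, α k * D.pd (i, s) (DiffPolyAlg.flatP D η β k))
            + (∑ l, ∑ m, η l m • (D.Dx (α m) * D.pd (i, s) (β l)))
          = D.Dx (∑ k, ∑ l, η k l • (α k * D.pd (i, s) (β l)))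
            + (if s = 0 then 0
                else ∑ k, ∑ l, η k l • (α k * D.pd (i, s - 1) (β l)))) ∧
      (∀ i : Fin n,
        DiffPolyAlg.reducedRawBracket D η α β i = D.pbracket η α β i) := by
  exact ⟨fun i s => DiffPolyAlg.key1 D η hη_symm α β i s,
    fun i => DiffPolyAlg.key2 D η hη_symm α β i⟩
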